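/- Fundamental averaged bound for catalytic codes. Let 2 ≤ d ≤ n and let ψ be a pure quantum state on A_f ⊗ F ⊗ X_1 ⊗ … ⊗ X_n ⊗ B_in of finite-dimensional systems. Suppose that for every partition {1,…,n} = I ∪ J with |I| = n−d+1 and |J| = d−1, the equality S(X_I B_in)_ψ = S(A_f)_ψ + S(F X_J)_ψ holds. Then S(A_f)_ψ − S(B_in)_ψ ≤ E_{|I|=n−d+1} S(X_I)_ψ − E_{|J|=d−1} S(X_J)_ψ − E_{|J|=d−1} S(F|X_J)_ψ, where the expectations are uniform averages over subsets of {1,…,n} of the indicated cardinality. -/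

import Mathlib

open scoped BigOperators ComplexOrder

/-- Von Neumann entropy of a matrix: `-∑ λ_j log λ_j` over the eigenvalues,
if the matrix is Hermitian (else junk value 0). Natural logarithm,
with the convention `0 * log 0 = 0` (automatic since `Real.log 0 = 0`). -/
noncomputable def vnEntropy {m : Type*} [Fintype m] [DecidableEq m]
    (ρ : Matrix m m ℂ) : ℝ :=
  if h : ρ.IsHermitian then
    -∑ j, h.eigenvalues j * Real.log (h.eigenvalues j)
  else 0

/-- Marginal (partial trace) of a state on the composite system
`⨂_{i : ι} X_i` (with `X_i = ℂ^{dim i}`), keeping the factors in `S`. -/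
noncomputable def marginal {ι : Type*} [Fintype ι] [DecidableEq ι]
    {dim : ι → ℕ}
    (ρ : Matrix ((i : ι) → Fin (dim i)) ((i : ι) → Fin (dim i)) ℂ)
    (S : Finset ι) :
    Matrix ((i : {j : ι // j ∈ S}) → Fin (dim i.1))
           ((i : {j : ι // j ∈ S}) → Fin (dim i.1)) ℂ :=
  fun x y =>
    ∑ z : (i : {j : ι // j ∉ S}) → Fin (dim i.1),
      ρ (fun i => if h : i ∈ S then x ⟨i, h⟩ else z ⟨i, h⟩)
        (fun i => if h : i ∈ S then y ⟨i, h⟩ else z ⟨i, h⟩)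

/-- Entropy of the marginal of `ρ` on the factors in `S`. -/
noncomputable def mEnt {ι : Type*} [Fintype ι] [DecidableEq ι]
    {dim : ι → ℕ}
    (ρ : Matrix ((i : ι) → Fin (dim i)) ((i : ι) → Fin (dim i)) ℂ)
    (S : Finset ι) : ℝ :=
  vnEntropy (marginal ρ S)


set_option linter.unusedSectionVars false

lemma logIneq {c p q : ℝ} (hc : 0 ≤ c) (hp : 0 ≤ p) (hq : 0 ≤ q)
    (h0 : q = 0 → c * p = 0) :
    c * (p - q) ≤ c * (p * Real.log p - p * Real.log q) := by
  rcases eq_or_lt_of_le hq with hq0 | hqpos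
  · have hcp := h0 hq0.symm
    rw [← hq0]
    have e1 : c * (p * Real.log p - p * Real.log 0) = (c * p) * (Real.log p - Real.log 0) := by ring
    have e2 : c * (p - 0) = c * p := by ring
    rw [e1, e2, hcp, zero_mul]
  · rcases eq_or_lt_of_le hp with hp0 | hppos
    · rw [← hp0]
      simp only [zero_mul, zero_sub, mul_zero, sub_zero]
      nlinarith
    · have hlog : Real.log (q / p) ≤ q / p - 1 := Real.log_le_sub_one_of_pos (by positivity)
      rw [Real.log_div (ne_of_gt hqpos) (ne_of_gt hppos)] at hlog
      have h2 : p * Real.log q - p * Real.log p ≤ q - p := by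
        have := mul_le_mul_of_nonneg_left hlog (le_of_lt hppos)
        have hne : p ≠ 0 := ne_of_gt hppos
        rw [mul_sub, mul_sub, mul_div_cancel₀ _ hne, mul_one] at this
        linarith
      nlinarith

lemma klein {n : Type*} [Fintype n] [DecidableEq n]
    (ρ : Matrix n n ℂ) (hρ : ρ.PosSemidef) (htr : ρ.trace = 1)
    (V : Matrix n n ℂ) (hV : V ∈ Matrix.unitaryGroup n ℂ)
    (q : n → ℝ) (hq0 : ∀ j, 0 ≤ q j) (hq1 : ∑ j, q j = 1)
    (hker : ∀ j, q j = 0 → ρ.mulVec (fun i => V i j) = 0) :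
    vnEntropy ρ ≤ -∑ j, ((star V * ρ * V) j j).re * Real.log (q j) := by
  classical
  have hH : ρ.IsHermitian := hρ.1
  set p : n → ℝ := hH.eigenvalues with hp
  set U : Matrix n n ℂ := (hH.eigenvectorUnitary : Matrix n n ℂ) with hU
  have hUmem : U ∈ Matrix.unitaryGroup n ℂ := hH.eigenvectorUnitary.2
  set W : Matrix n n ℂ := star U * V with hWdef
  have hWmem : W ∈ Matrix.unitaryGroup n ℂ := mul_mem (Unitary.star_mem hUmem) hV
  set c : n → n → ℝ := fun i j => Complex.normSq (W i j) with hc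
  have hcnn : ∀ i j, 0 ≤ c i j := fun i j => Complex.normSq_nonneg _
  have hppos : ∀ i, 0 ≤ p i := hρ.eigenvalues_nonneg
  -- row sums of c are 1
  have hrow : ∀ i, ∑ j, c i j = 1 := by
    intro i
    have h1 : W * star W = 1 := Matrix.mem_unitaryGroup_iff.mp hWmem
    have h2 := congrFun (congrFun h1 i) i
    rw [Matrix.mul_apply] at h2
    simp only [Matrix.star_apply, RCLike.star_def, Matrix.one_apply_eq, Complex.mul_conj] at h2
    exact_mod_cast h2
  have hcol : ∀ j, ∑ i, c i j = 1 := by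
    intro j
    have h1 : star W * W = 1 := Matrix.mem_unitaryGroup_iff'.mp hWmem
    have h2 := congrFun (congrFun h1 j) j
    rw [Matrix.mul_apply] at h2
    simp only [Matrix.star_apply, RCLike.star_def, Matrix.one_apply_eq] at h2
    have h3 : ∀ i : n, (starRingEnd ℂ) (W i j) * W i j = (Complex.normSq (W i j) : ℂ) := by
      intro i; rw [mul_comm, Complex.mul_conj]
    rw [Finset.sum_congr rfl (fun i _ => h3 i)] at h2
    exact_mod_cast h2
  -- spectral decomposition facts
  set D : Matrix n n ℂ := Matrix.diagonal (Complex.ofReal ∘ p) with hD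
  have hspec : ρ = U * D * star U := hH.spectral_theorem
  have hUU : star U * U = 1 := Matrix.mem_unitaryGroup_iff'.mp hUmem
  have hconj : star V * ρ * V = star W * D * W := by
    rw [hspec]
    have : star W = star V * U := by
      rw [hWdef, StarMul.star_mul, star_star]
    rw [this, hWdef]
    noncomm_ring
  -- trace: sum of eigenvalues is 1
  have hp1 : ∑ i, p i = 1 := by
    have h1 : ρ.trace = D.trace := by
      rw [hspec, Matrix.trace_mul_cycle, hUU, Matrix.one_mul]
    rw [htr, hD, Matrix.trace_diagonal] at h1
    have h2 : (1 : ℂ) = ((∑ i, p i : ℝ) : ℂ) := by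
      rw [h1]; push_cast; rfl
    exact_mod_cast h2.symm
  -- diagonal entries of star V * ρ * V
  have hr : ∀ j, ((star V * ρ * V) j j).re = ∑ i, p i * c i j := by
    intro j
    rw [hconj]
    rw [Matrix.mul_apply]
    have h3 : ∀ i, (star W * D) j i * W i j = (p i : ℂ) * (c i j : ℂ) := by
      intro i
      rw [Matrix.mul_apply]
      rw [Finset.sum_eq_single i]
      · simp only [Matrix.star_apply, RCLike.star_def, hD, Matrix.diagonal_apply_eq,
          Function.comp_apply]
        have e : (starRingEnd ℂ) (W i j) * (p i : ℂ) * W i j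
            = (p i : ℂ) * (W i j * (starRingEnd ℂ) (W i j)) := by ring
        rw [e, Complex.mul_conj]
      · intro b _ hb
        simp [hD, Matrix.diagonal_apply_ne _ hb]
      · intro h; exact absurd (Finset.mem_univ i) h
    rw [Finset.sum_congr rfl (fun i _ => h3 i)]
    have : (∑ i, (p i : ℂ) * (c i j : ℂ)) = ((∑ i, p i * c i j : ℝ) : ℂ) := by
      push_cast; rfl
    rw [this, Complex.ofReal_re]
  -- kernel condition
  have hkc : ∀ j, q j = 0 → ∀ i, p i * c i j = 0 := by
    intro j hj i
    have hcol0 : ∀ x, (ρ * V) x j = 0 := by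
      intro x
      have := congrFun (hker j hj) x
      rw [Matrix.mulVec] at this
      rw [Matrix.mul_apply]
      exact this
    have h1 : (star U * (ρ * V)) i j = 0 := by
      rw [Matrix.mul_apply]
      simp [hcol0]
    have h2 : star U * (ρ * V) = D * W := by
      rw [hspec]
      have : (U * D * star U) * V = U * (D * (star U * V)) := by noncomm_ring
      rw [this, hWdef, ← Matrix.mul_assoc, ← Matrix.mul_assoc, hUU, Matrix.one_mul]
    rw [h2, Matrix.mul_apply] at h1
    rw [Finset.sum_eq_single i] at h1
    · simp only [hD, Matrix.diagonal_apply_eq, Function.comp_apply] at h1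
      rcases mul_eq_zero.mp h1 with h | h
      · have hz : p i = 0 := Complex.ofReal_eq_zero.mp h
        rw [hz, zero_mul]
      · have hz : c i j = 0 := by rw [hc]; simp [h]
        rw [hz, mul_zero]
    · intro b _ hb
      have hz : D i b = 0 := Matrix.diagonal_apply_ne _ (fun hh => hb hh.symm)
      rw [hz, zero_mul]
    · intro h; exact absurd (Finset.mem_univ i) h
  -- the main estimate
  have key : ∑ i, ∑ j, c i j * (p i * Real.log (q j)) ≤
      ∑ i, ∑ j, c i j * (p i * Real.log (p i)) := by
    have h1 : ∑ i, ∑ j, c i j * (p i - q j) ≤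
        ∑ i, ∑ j, (c i j * (p i * Real.log (p i)) - c i j * (p i * Real.log (q j))) := by
      refine Finset.sum_le_sum (fun i _ => Finset.sum_le_sum (fun j _ => ?_))
      have := logIneq (hcnn i j) (hppos i) (hq0 j)
        (fun h => by rw [mul_comm]; exact hkc j h i)
      calc c i j * (p i - q j)
          ≤ c i j * (p i * Real.log (p i) - p i * Real.log (q j)) := this
        _ = c i j * (p i * Real.log (p i)) - c i j * (p i * Real.log (q j)) := by ring
    have h2 : ∑ i, ∑ j, c i j * (p i - q j) = 0 := by
      have e1 : ∀ i, ∑ j, c i j * (p i - q j) = p i - ∑ j, c i j * q j := by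
        intro i
        have : ∀ j, c i j * (p i - q j) = c i j * p i - c i j * q j := fun j => by ring
        rw [Finset.sum_congr rfl (fun j _ => this j), Finset.sum_sub_distrib,
          ← Finset.sum_mul, hrow i, one_mul]
      rw [Finset.sum_congr rfl (fun i _ => e1 i), Finset.sum_sub_distrib, hp1]
      rw [Finset.sum_comm]
      have e2 : ∀ j, ∑ i, c i j * q j = q j := by
        intro j; rw [← Finset.sum_mul, hcol j, one_mul]
      rw [Finset.sum_congr rfl (fun j _ => e2 j), hq1, sub_self]
    rw [Finset.sum_congr rfl (fun i _ => Finset.sum_sub_distrib _ _), Finset.sum_sub_distrib] at h1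
    linarith
  -- assemble
  rw [vnEntropy, dif_pos hH]
  have rrw : ∑ j, ((star V * ρ * V) j j).re * Real.log (q j)
      = ∑ j, (∑ i, p i * c i j) * Real.log (q j) :=
    Finset.sum_congr rfl (fun j _ => by rw [hr j])
  rw [rrw]
  show -∑ i, p i * Real.log (p i) ≤ -∑ j, (∑ i, p i * c i j) * Real.log (q j)
  have lhs_eq : ∑ i, p i * Real.log (p i) = ∑ i, ∑ j, c i j * (p i * Real.log (p i)) := by
    refine Finset.sum_congr rfl (fun i _ => ?_)
    rw [← Finset.sum_mul, hrow i, one_mul]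
  have rhs_eq : ∑ j, (∑ i, p i * c i j) * Real.log (q j)
      = ∑ i, ∑ j, c i j * (p i * Real.log (q j)) := by
    rw [Finset.sum_comm]
    refine Finset.sum_congr rfl (fun j _ => ?_)
    rw [Finset.sum_mul]
    refine Finset.sum_congr rfl (fun i _ => by ring)
  rw [neg_le_neg_iff, rhs_eq]
  calc ∑ i, ∑ j, c i j * (p i * Real.log (q j))
      ≤ ∑ i, ∑ j, c i j * (p i * Real.log (p i)) := key
    _ = ∑ i, p i * Real.log (p i) := lhs_eq.symm

section Ptr

variable {N α β : Type*} [Fintype N] [DecidableEq N] [Fintype α] [DecidableEq α]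
  [Fintype β] [DecidableEq β]

/-- Partial trace over the second factor, transported along an equivalence. -/
noncomputable def ptr (e : N ≃ α × β) (ρ : Matrix N N ℂ) : Matrix α α ℂ :=
  fun a a' => ∑ b : β, ρ (e.symm (a, b)) (e.symm (a', b))

lemma ptr_quadform (e : N ≃ α × β) (ρ : Matrix N N ℂ) (x y : α → ℂ) :
    dotProduct (star x) ((ptr e ρ).mulVec y)
      = ∑ b : β, dotProduct (star (fun i => if (e i).2 = b then x (e i).1 else 0))
          (ρ.mulVec (fun i => if (e i).2 = b then y (e i).1 else 0)) := by
  have hrhs : ∀ b : β,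
      dotProduct (star (fun i => if (e i).2 = b then x (e i).1 else 0))
          (ρ.mulVec (fun i => if (e i).2 = b then y (e i).1 else 0))
        = ∑ a : α, ∑ a' : α, star (x a) * (ρ (e.symm (a, b)) (e.symm (a', b)) * y a') := by
    intro b
    simp only [dotProduct, Matrix.mulVec, Pi.star_apply]
    rw [← Equiv.sum_comp e.symm
      (fun i => star (if (e i).2 = b then x (e i).1 else 0)
        * ∑ i' : N, ρ i i' * (if (e i').2 = b then y (e i').1 else 0))]
    rw [Fintype.sum_prod_type]
    have h1 : ∀ (a : α) (c : β),
        star (if (e (e.symm (a, c))).2 = b then x (e (e.symm (a, c))).1 else 0)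
          * (∑ i' : N, ρ (e.symm (a, c)) i' * (if (e i').2 = b then y (e i').1 else 0))
        = if c = b then star (x a)
            * (∑ i' : N, ρ (e.symm (a, b)) i' * (if (e i').2 = b then y (e i').1 else 0)) else 0 := by
      intro a c
      by_cases hc : c = b
      · subst hc; simp [Equiv.apply_symm_apply]
      · simp [Equiv.apply_symm_apply, hc]
    rw [Finset.sum_congr rfl (fun a _ => Finset.sum_congr rfl (fun c _ => h1 a c))]
    rw [Finset.sum_congr rfl (fun a _ => Finset.sum_ite_eq' Finset.univ b _)]
    simp only [Finset.mem_univ, if_true]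
    refine Finset.sum_congr rfl (fun a _ => ?_)
    rw [← Equiv.sum_comp e.symm
      (fun i' => ρ (e.symm (a, b)) i' * (if (e i').2 = b then y (e i').1 else 0))]
    rw [Fintype.sum_prod_type]
    have h2 : ∀ (a' : α) (c : β),
        ρ (e.symm (a, b)) (e.symm (a', c))
            * (if (e (e.symm (a', c))).2 = b then y (e (e.symm (a', c))).1 else 0)
        = if c = b then ρ (e.symm (a, b)) (e.symm (a', b)) * y a' else 0 := by
      intro a' c
      by_cases hc : c = b
      · subst hc; simp [Equiv.apply_symm_apply]
      · simp [Equiv.apply_symm_apply, hc]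
    rw [Finset.sum_congr rfl (fun a' _ => Finset.sum_congr rfl (fun c _ => h2 a' c))]
    rw [Finset.sum_congr rfl (fun a' _ => Finset.sum_ite_eq' Finset.univ b _)]
    simp only [Finset.mem_univ, if_true, Finset.mul_sum]
  rw [Finset.sum_congr rfl (fun b _ => hrhs b)]
  simp only [dotProduct, Matrix.mulVec, Pi.star_apply]
  rw [Finset.sum_comm]
  refine Finset.sum_congr rfl (fun a _ => ?_)
  rw [Finset.mul_sum, Finset.sum_comm]
  refine Finset.sum_congr rfl (fun a' _ => ?_)
  rw [ptr]
  rw [Finset.sum_mul]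
  rw [Finset.mul_sum]

lemma ptr_trace (e : N ≃ α × β) (ρ : Matrix N N ℂ) : (ptr e ρ).trace = ρ.trace := by
  rw [Matrix.trace, Matrix.trace]
  simp only [Matrix.diag, ptr]
  calc ∑ a : α, ∑ b : β, ρ (e.symm (a, b)) (e.symm (a, b))
      = ∑ p : α × β, ρ (e.symm p) (e.symm p) :=
        (Fintype.sum_prod_type (fun p : α × β => ρ (e.symm p) (e.symm p))).symm
    _ = ∑ i : N, ρ i i := Equiv.sum_comp e.symm (fun i => ρ i i)

lemma ptr_isHermitian (e : N ≃ α × β) {ρ : Matrix N N ℂ} (hρ : ρ.IsHermitian) :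
    (ptr e ρ).IsHermitian := by
  rw [Matrix.IsHermitian]
  ext a a'
  rw [Matrix.conjTranspose_apply, ptr, ptr, star_sum]
  exact Finset.sum_congr rfl (fun b _ => hρ.apply _ _)

lemma ptr_posSemidef (e : N ≃ α × β) {ρ : Matrix N N ℂ} (hρ : ρ.PosSemidef) :
    (ptr e ρ).PosSemidef := by
  refine Matrix.PosSemidef.of_dotProduct_mulVec_nonneg (ptr_isHermitian e hρ.1) (fun x => ?_)
  rw [ptr_quadform]
  exact Finset.sum_nonneg (fun b _ => hρ.dotProduct_mulVec_nonneg _)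

lemma ptr_ker (e : N ≃ α × β) {ρ : Matrix N N ℂ} (hρ : ρ.PosSemidef)
    (u : α → ℂ) (hu : (ptr e ρ).mulVec u = 0) (w : β → ℂ) :
    ρ.mulVec (fun i => u (e i).1 * w (e i).2) = 0 := by
  have h0 : dotProduct (star u) ((ptr e ρ).mulVec u) = 0 := by
    rw [hu, dotProduct_zero]
  rw [ptr_quadform] at h0
  have hz : ∀ b ∈ (Finset.univ : Finset β),
      dotProduct (star (fun i => if (e i).2 = b then u (e i).1 else 0))
        (ρ.mulVec (fun i => if (e i).2 = b then u (e i).1 else 0)) = 0 :=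
    (Finset.sum_eq_zero_iff_of_nonneg (fun b _ => hρ.dotProduct_mulVec_nonneg _)).mp h0
  have hzv : ∀ b : β, ρ.mulVec (fun i => if (e i).2 = b then u (e i).1 else 0) = 0 :=
    fun b => (hρ.dotProduct_mulVec_zero_iff _).mp (hz b (Finset.mem_univ b))
  funext i
  show (∑ i' : N, ρ i i' * (u (e i').1 * w (e i').2)) = 0
  have h1 : ∀ i' : N, ρ i i' * (u (e i').1 * w (e i').2)
      = ∑ b : β, w b * (ρ i i' * (if (e i').2 = b then u (e i').1 else 0)) := by
    intro i'
    have hb : ∀ b : β, w b * (ρ i i' * (if (e i').2 = b then u (e i').1 else 0))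
        = if (e i').2 = b then w b * (ρ i i' * u (e i').1) else 0 := by
      intro b; by_cases h : (e i').2 = b <;> simp [h]
    rw [Finset.sum_congr rfl (fun b _ => hb b)]
    rw [Finset.sum_ite_eq Finset.univ (e i').2 (fun b => w b * (ρ i i' * u (e i').1))]
    simp only [Finset.mem_univ, if_true]
    ring
  rw [Finset.sum_congr rfl (fun i' _ => h1 i')]
  rw [Finset.sum_comm]
  have h2 : ∀ b : β, (∑ i' : N, w b * (ρ i i' * (if (e i').2 = b then u (e i').1 else 0))) = 0 := by
    intro b
    rw [← Finset.mul_sum]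
    have h3 := congrFun (hzv b) i
    simp only [Matrix.mulVec, dotProduct, Pi.zero_apply] at h3
    rw [h3, mul_zero]
  rw [Finset.sum_congr rfl (fun b _ => h2 b), Finset.sum_const_zero]

end Ptr

lemma sum_eigenvalues_eq_one {n : Type*} [Fintype n] [DecidableEq n]
    {A : Matrix n n ℂ} (hA : A.IsHermitian) (h1 : A.trace = 1) :
    ∑ i, hA.eigenvalues i = 1 := by
  have hUU : star (hA.eigenvectorUnitary : Matrix n n ℂ) * (hA.eigenvectorUnitary : Matrix n n ℂ) = 1 :=
    Matrix.mem_unitaryGroup_iff'.mp hA.eigenvectorUnitary.2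
  have hspec : A = (hA.eigenvectorUnitary : Matrix n n ℂ)
      * Matrix.diagonal (Complex.ofReal ∘ hA.eigenvalues)
      * star (hA.eigenvectorUnitary : Matrix n n ℂ) := hA.spectral_theorem
  have h2 : A.trace = (Matrix.diagonal (Complex.ofReal ∘ hA.eigenvalues)).trace := by
    conv_lhs => rw [hspec]
    rw [Matrix.trace_mul_cycle, hUU, Matrix.one_mul]
  rw [h1, Matrix.trace_diagonal] at h2
  have h3 : (1 : ℂ) = ((∑ i, hA.eigenvalues i : ℝ) : ℂ) := by
    rw [h2]; push_cast; rfl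
  exact_mod_cast h3.symm

lemma eigcol_zero {n : Type*} [Fintype n] [DecidableEq n]
    {A : Matrix n n ℂ} (hA : A.IsHermitian) (k : n) (h : hA.eigenvalues k = 0) :
    A.mulVec (fun i => (hA.eigenvectorUnitary : Matrix n n ℂ) i k) = 0 := by
  set U : Matrix n n ℂ := (hA.eigenvectorUnitary : Matrix n n ℂ) with hU
  have hUU : star U * U = 1 := Matrix.mem_unitaryGroup_iff'.mp hA.eigenvectorUnitary.2
  have hspec : A = U * Matrix.diagonal (Complex.ofReal ∘ hA.eigenvalues) * star U :=
    hA.spectral_theorem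
  have h2 : A * U = U * Matrix.diagonal (Complex.ofReal ∘ hA.eigenvalues) := by
    conv_lhs => rw [hspec]
    rw [Matrix.mul_assoc, Matrix.mul_assoc, hUU, Matrix.mul_one]
  funext x
  have h1 : A.mulVec (fun i => U i k) x = (A * U) x k := by
    rw [Matrix.mul_apply, Matrix.mulVec, dotProduct]
  rw [h1, h2, Matrix.mul_diagonal]
  simp [h]

section Mix

variable {N α β : Type*} [Fintype N] [DecidableEq N] [Fintype α] [DecidableEq α]
  [Fintype β] [DecidableEq β]

lemma mix_unitary (e : N ≃ α × β) {P : Matrix α α ℂ} {Q : Matrix β β ℂ}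
    (hP : P ∈ Matrix.unitaryGroup α ℂ) (hQ : Q ∈ Matrix.unitaryGroup β ℂ) :
    (Matrix.of fun i j => P (e i).1 (e j).1 * Q (e i).2 (e j).2) ∈ Matrix.unitaryGroup N ℂ := by
  have hPP : star P * P = 1 := Matrix.mem_unitaryGroup_iff'.mp hP
  have hQQ : star Q * Q = 1 := Matrix.mem_unitaryGroup_iff'.mp hQ
  rw [Matrix.mem_unitaryGroup_iff']
  ext j j'
  rw [Matrix.mul_apply]
  simp only [Matrix.star_apply, Matrix.of_apply]
  rw [← Equiv.sum_comp e.symm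
    (fun i => star (P (e i).1 (e j).1 * Q (e i).2 (e j).2) * (P (e i).1 (e j').1 * Q (e i).2 (e j').2))]
  rw [Fintype.sum_prod_type]
  simp only [Equiv.apply_symm_apply]
  have h1 : ∀ (a : α) (b : β),
      star (P a (e j).1 * Q b (e j).2) * (P a (e j').1 * Q b (e j').2)
      = (star (P a (e j).1) * P a (e j').1) * (star (Q b (e j).2) * Q b (e j').2) := by
    intro a b; simp only [star_mul']; ring
  rw [Finset.sum_congr rfl (fun a _ => Finset.sum_congr rfl (fun b _ => h1 a b))]
  have h2 : ∀ a : α, ∑ b : β, (star (P a (e j).1) * P a (e j').1) * (star (Q b (e j).2) * Q b (e j').2)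
      = (star (P a (e j).1) * P a (e j').1) * ((star Q * Q) (e j).2 (e j').2) := by
    intro a
    rw [← Finset.mul_sum, Matrix.mul_apply]
    simp only [Matrix.star_apply]
  rw [Finset.sum_congr rfl (fun a _ => h2 a), ← Finset.sum_mul]
  have h3 : ∑ a : α, star (P a (e j).1) * P a (e j').1 = (star P * P) (e j).1 (e j').1 := by
    rw [Matrix.mul_apply]; simp only [Matrix.star_apply]
  rw [h3, hPP, hQQ]
  by_cases h : j = j'
  · subst h; simp
  · have h4 : ¬ ((e j).1 = (e j').1 ∧ (e j).2 = (e j').2) := by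
      intro hc
      exact h (e.injective (Prod.ext hc.1 hc.2))
    rw [Matrix.one_apply_ne h]
    by_cases hc1 : (e j).1 = (e j').1
    · have hc2 : ¬ (e j).2 = (e j').2 := fun hc2 => h4 ⟨hc1, hc2⟩
      rw [Matrix.one_apply_ne hc2, mul_zero]
    · rw [Matrix.one_apply_ne hc1, zero_mul]

lemma ptr_conj (e : N ≃ α × β) (ρ : Matrix N N ℂ) (P : Matrix α α ℂ) (Q : Matrix β β ℂ)
    (hQ : Q * star Q = 1) :
    ptr e (star (Matrix.of fun i j => P (e i).1 (e j).1 * Q (e i).2 (e j).2) * ρ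
        * (Matrix.of fun i j => P (e i).1 (e j).1 * Q (e i).2 (e j).2))
      = star P * ptr e ρ * P := by
  set V : Matrix N N ℂ := Matrix.of fun i j => P (e i).1 (e j).1 * Q (e i).2 (e j).2 with hV
  have hexp : ∀ u v : N, (star V * ρ * V) u v
      = ∑ i : N, ∑ i' : N, star (V i u) * ρ i i' * V i' v := by
    intro u v
    rw [Matrix.mul_apply]
    simp only [Matrix.mul_apply, Matrix.star_apply, Finset.sum_mul]
    rw [Finset.sum_comm]
  ext k k'
  rw [ptr]
  rw [Finset.sum_congr rfl (fun l _ => hexp (e.symm (k, l)) (e.symm (k', l)))]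
  -- move the l-sum inside
  rw [Finset.sum_comm]
  have step1 : ∀ i : N, ∑ l : β, ∑ i' : N, star (V i (e.symm (k, l))) * ρ i i' * V i' (e.symm (k', l))
      = ∑ i' : N, ∑ l : β, star (V i (e.symm (k, l))) * ρ i i' * V i' (e.symm (k', l)) :=
    fun i => Finset.sum_comm
  rw [Finset.sum_congr rfl (fun i _ => step1 i)]
  have step2 : ∀ i i' : N, ∑ l : β, star (V i (e.symm (k, l))) * ρ i i' * V i' (e.symm (k', l))
      = (star (P (e i).1 k) * ρ i i' * P (e i').1 k') * ((Q * star Q) (e i').2 (e i).2) := by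
    intro i i'
    rw [Matrix.mul_apply]
    rw [Finset.mul_sum]
    refine Finset.sum_congr rfl (fun l _ => ?_)
    simp only [hV, Matrix.of_apply, Equiv.apply_symm_apply, star_mul', Matrix.star_apply]
    ring
  rw [Finset.sum_congr rfl (fun i _ => Finset.sum_congr rfl (fun i' _ => step2 i i'))]
  rw [hQ]
  -- collapse the inner sum over i' using the delta
  have step3 : ∀ i : N, ∑ i' : N, (star (P (e i).1 k) * ρ i i' * P (e i').1 k') * ((1 : Matrix β β ℂ) (e i').2 (e i).2)
      = ∑ a' : α, star (P (e i).1 k) * ρ i (e.symm (a', (e i).2)) * P a' k' := by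
    intro i
    rw [← Equiv.sum_comp e.symm
      (fun i' => (star (P (e i).1 k) * ρ i i' * P (e i').1 k') * ((1 : Matrix β β ℂ) (e i').2 (e i).2))]
    rw [Fintype.sum_prod_type]
    have h5 : ∀ (a' : α) (b' : β),
        (star (P (e i).1 k) * ρ i (e.symm (a', b')) * P (e (e.symm (a', b'))).1 k')
            * ((1 : Matrix β β ℂ) (e (e.symm (a', b'))).2 (e i).2)
        = if b' = (e i).2 then star (P (e i).1 k) * ρ i (e.symm (a', (e i).2)) * P a' k' else 0 := by
      intro a' b'
      rw [e.apply_symm_apply]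
      by_cases hb : b' = (e i).2
      · subst hb; rw [Matrix.one_apply_eq, mul_one, if_pos rfl]
      · rw [Matrix.one_apply_ne hb, mul_zero, if_neg hb]
    rw [Finset.sum_congr rfl (fun a' _ => Finset.sum_congr rfl (fun b' _ => h5 a' b'))]
    refine Finset.sum_congr rfl (fun a' _ => ?_)
    rw [Finset.sum_ite_eq' Finset.univ (e i).2
      (fun _ => star (P (e i).1 k) * ρ i (e.symm (a', (e i).2)) * P a' k')]
    simp
  rw [Finset.sum_congr rfl (fun i _ => step3 i)]
  -- reindex the outer sum over i
  rw [← Equiv.sum_comp e.symm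
    (fun i => ∑ a' : α, star (P (e i).1 k) * ρ i (e.symm (a', (e i).2)) * P a' k')]
  rw [Fintype.sum_prod_type]
  simp only [Equiv.apply_symm_apply]
  -- now compute the RHS
  have hrhs : (star P * ptr e ρ * P) k k'
      = ∑ a : α, ∑ a' : α, star (P a k) * ptr e ρ a a' * P a' k' := by
    rw [Matrix.mul_apply]
    simp only [Matrix.mul_apply, Matrix.star_apply, Finset.sum_mul]
    rw [Finset.sum_comm]
  rw [hrhs]
  refine Finset.sum_congr rfl (fun a _ => ?_)
  rw [Finset.sum_comm]
  refine Finset.sum_congr rfl (fun a' _ => ?_)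
  rw [ptr, Finset.mul_sum, Finset.sum_mul]

end Mix

lemma psd_diag_nonneg {n : Type*} [Fintype n] [DecidableEq n]
    {M : Matrix n n ℂ} (hM : M.PosSemidef) (j : n) : 0 ≤ M j j := by
  have h := hM.dotProduct_mulVec_nonneg (Pi.single j 1)
  have hs : star (Pi.single j 1 : n → ℂ) = Pi.single j 1 := by
    funext i
    rcases eq_or_ne i j with hij | hij
    · subst hij; simp
    · simp [Pi.single_eq_of_ne hij]
  rw [hs, single_dotProduct, Matrix.mulVec_single] at h
  simpa using h

lemma vnEntropy_subadd {N α β : Type*} [Fintype N] [DecidableEq N] [Fintype α] [DecidableEq α]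
    [Fintype β] [DecidableEq β] (e : N ≃ α × β) (ρ : Matrix N N ℂ)
    (hρ : ρ.PosSemidef) (htr : ρ.trace = 1) :
    vnEntropy ρ ≤ vnEntropy (ptr e ρ) + vnEntropy (ptr (e.trans (Equiv.prodComm α β)) ρ) := by
  classical
  set e' : N ≃ β × α := e.trans (Equiv.prodComm α β) with he'
  set A : Matrix α α ℂ := ptr e ρ with hAdef
  set B : Matrix β β ℂ := ptr e' ρ with hBdef
  have hA : A.PosSemidef := ptr_posSemidef e hρ
  have hB : B.PosSemidef := ptr_posSemidef e' hρ
  have htrA : A.trace = 1 := by rw [hAdef, ptr_trace]; exact htr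
  have htrB : B.trace = 1 := by rw [hBdef, ptr_trace]; exact htr
  set a : α → ℝ := hA.1.eigenvalues with ha
  set b : β → ℝ := hB.1.eigenvalues with hb
  have suma : ∑ k, a k = 1 := sum_eigenvalues_eq_one hA.1 htrA
  have sumb : ∑ l, b l = 1 := sum_eigenvalues_eq_one hB.1 htrB
  have ha0 : ∀ k, 0 ≤ a k := hA.eigenvalues_nonneg
  have hb0 : ∀ l, 0 ≤ b l := hB.eigenvalues_nonneg
  set UA : Matrix α α ℂ := (hA.1.eigenvectorUnitary : Matrix α α ℂ) with hUA
  set UB : Matrix β β ℂ := (hB.1.eigenvectorUnitary : Matrix β β ℂ) with hUB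
  have hUAmem : UA ∈ Matrix.unitaryGroup α ℂ := hA.1.eigenvectorUnitary.2
  have hUBmem : UB ∈ Matrix.unitaryGroup β ℂ := hB.1.eigenvectorUnitary.2
  set V : Matrix N N ℂ := Matrix.of fun i j => UA (e i).1 (e j).1 * UB (e i).2 (e j).2 with hV
  have hVmem : V ∈ Matrix.unitaryGroup N ℂ := mix_unitary e hUAmem hUBmem
  set q : N → ℝ := fun j => a (e j).1 * b (e j).2 with hq
  have hq0 : ∀ j, 0 ≤ q j := fun j => mul_nonneg (ha0 _) (hb0 _)
  have hq1 : ∑ j, q j = 1 := by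
    rw [hq]
    rw [← Equiv.sum_comp e.symm (fun j => a (e j).1 * b (e j).2)]
    rw [Fintype.sum_prod_type]
    simp only [Equiv.apply_symm_apply]
    rw [← Finset.sum_mul_sum]
    rw [suma, sumb, one_mul]
  have hker : ∀ j, q j = 0 → ρ.mulVec (fun i => V i j) = 0 := by
    intro j hqj
    rcases mul_eq_zero.mp hqj with hz | hz
    · have h1 : A.mulVec (fun i => UA i (e j).1) = 0 := eigcol_zero hA.1 (e j).1 hz
      have h2 := ptr_ker e hρ _ h1 (fun c => UB c (e j).2)
      exact h2
    · have h1 : B.mulVec (fun i => UB i (e j).2) = 0 := eigcol_zero hB.1 (e j).2 hz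
      have h2 := ptr_ker e' hρ _ h1 (fun k => UA k (e j).1)
      have h3 : (fun i => V i j) = (fun i => UB (e' i).1 (e j).2 * UA (e' i).2 (e j).1) := by
        funext i; exact mul_comm _ _
      rw [h3]
      exact h2
  have hK := klein ρ hρ htr V hVmem q hq0 hq1 hker
  -- the conjugated matrix
  set M : Matrix N N ℂ := star V * ρ * V with hM
  have hMpsd : M.PosSemidef := by
    have h1 := hρ.mul_mul_conjTranspose_same (star V)
    have h2 : Matrix.conjTranspose (star V) = V := by
      rw [← Matrix.star_eq_conjTranspose, star_star]
    rwa [h2] at h1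
  have hUBQ : UB * star UB = 1 := Matrix.mem_unitaryGroup_iff.mp hUBmem
  have hUAQ : UA * star UA = 1 := Matrix.mem_unitaryGroup_iff.mp hUAmem
  have hMA : ptr e M = Matrix.diagonal (RCLike.ofReal ∘ a) := by
    rw [hM, hV]
    rw [ptr_conj e ρ UA UB hUBQ]
    rw [← hAdef]
    exact (Unitary.conjStarAlgAut_star_apply (S := ℂ) _ _).symm.trans hA.1.conjStarAlgAut_star_eigenvectorUnitary
  have hMB : ptr e' M = Matrix.diagonal (RCLike.ofReal ∘ b) := by
    have hVV : V = Matrix.of fun i j => UB (e' i).1 (e' j).1 * UA (e' i).2 (e' j).2 := by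
      ext i j
      exact mul_comm _ _
    rw [hM, hVV]
    rw [ptr_conj e' ρ UB UA hUAQ]
    rw [← hBdef]
    exact (Unitary.conjStarAlgAut_star_apply (S := ℂ) _ _).symm.trans hB.1.conjStarAlgAut_star_eigenvectorUnitary
  set r : N → ℝ := fun j => (M j j).re with hr
  have hr0 : ∀ j, 0 ≤ r j := by
    intro j
    have := psd_diag_nonneg hMpsd j
    rw [Complex.le_def] at this
    exact this.1
  have hsuml : ∀ k, ∑ l, r (e.symm (k, l)) = a k := by
    intro k
    have hc : ptr e M k k = Matrix.diagonal (RCLike.ofReal ∘ a) k k := by rw [hMA]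
    rw [Matrix.diagonal_apply_eq] at hc
    have hc3 := congrArg Complex.re hc
    simp only [ptr, Function.comp_apply] at hc3
    rw [Complex.re_sum] at hc3
    exact hc3
  have hsumk : ∀ l, ∑ k, r (e.symm (k, l)) = b l := by
    intro l
    have hc : ptr e' M l l = Matrix.diagonal (RCLike.ofReal ∘ b) l l := by rw [hMB]
    rw [Matrix.diagonal_apply_eq] at hc
    have hc3 := congrArg Complex.re hc
    simp only [ptr, Function.comp_apply] at hc3
    rw [Complex.re_sum] at hc3
    exact hc3
  have hvana : ∀ k, a k = 0 → ∀ l, r (e.symm (k, l)) = 0 := by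
    intro k hk l
    have h1 : ∑ l, r (e.symm (k, l)) = 0 := by rw [hsuml k, hk]
    exact (Finset.sum_eq_zero_iff_of_nonneg (fun l _ => hr0 _)).mp h1 l (Finset.mem_univ l)
  have hvanb : ∀ l, b l = 0 → ∀ k, r (e.symm (k, l)) = 0 := by
    intro l hl k
    have h1 : ∑ k, r (e.symm (k, l)) = 0 := by rw [hsumk l, hl]
    exact (Finset.sum_eq_zero_iff_of_nonneg (fun k _ => hr0 _)).mp h1 k (Finset.mem_univ k)
  -- compute the RHS of Klein
  have hRHS : -∑ j, ((star V * ρ * V) j j).re * Real.log (q j)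
      = (-∑ k, a k * Real.log (a k)) + (-∑ l, b l * Real.log (b l)) := by
    have h1 : ∑ j, ((star V * ρ * V) j j).re * Real.log (q j)
        = ∑ k, ∑ l, r (e.symm (k, l)) * Real.log (a k * b l) := by
      rw [← Equiv.sum_comp e.symm (fun j => ((star V * ρ * V) j j).re * Real.log (q j))]
      rw [Fintype.sum_prod_type]
      refine Finset.sum_congr rfl (fun k _ => Finset.sum_congr rfl (fun l _ => ?_))
      rw [hq]
      simp only [Equiv.apply_symm_apply]
      rfl
    have h2 : ∀ (k : α) (l : β), r (e.symm (k, l)) * Real.log (a k * b l)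
        = r (e.symm (k, l)) * Real.log (a k) + r (e.symm (k, l)) * Real.log (b l) := by
      intro k l
      by_cases hak : a k = 0
      · rw [hvana k hak l]; ring
      · by_cases hbl : b l = 0
        · rw [hvanb l hbl k]; ring
        · rw [Real.log_mul hak hbl]; ring
    rw [h1]
    rw [Finset.sum_congr rfl (fun k _ => Finset.sum_congr rfl (fun l _ => h2 k l))]
    rw [Finset.sum_congr rfl (fun k (_ : k ∈ Finset.univ) => Finset.sum_add_distrib)]
    rw [Finset.sum_add_distrib]
    have h3 : ∑ k, ∑ l, r (e.symm (k, l)) * Real.log (a k) = ∑ k, a k * Real.log (a k) := by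
      refine Finset.sum_congr rfl (fun k _ => ?_)
      rw [← Finset.sum_mul, hsuml k]
    have h4 : ∑ k, ∑ l, r (e.symm (k, l)) * Real.log (b l) = ∑ l, b l * Real.log (b l) := by
      rw [Finset.sum_comm]
      refine Finset.sum_congr rfl (fun l _ => ?_)
      rw [← Finset.sum_mul, hsumk l]
    rw [h3, h4]
    ring
  have hvA : vnEntropy A = -∑ k, a k * Real.log (a k) := by
    rw [vnEntropy, dif_pos hA.1]
  have hvB : vnEntropy B = -∑ l, b l * Real.log (b l) := by
    rw [vnEntropy, dif_pos hB.1]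
  rw [hvA, hvB]
  rw [← hRHS]
  exact hK

section Marginal

variable {ι : Type*} [Fintype ι] [DecidableEq ι] {dim : ι → ℕ}

def splitEquiv (dim : ι → ℕ) (S : Finset ι) :
    ((i : ι) → Fin (dim i)) ≃
      (((i : {j : ι // j ∈ S}) → Fin (dim i.1)) × ((i : {j : ι // j ∉ S}) → Fin (dim i.1))) where
  toFun f := (fun i => f i.1, fun i => f i.1)
  invFun xz := fun i => if h : i ∈ S then xz.1 ⟨i, h⟩ else xz.2 ⟨i, h⟩
  left_inv f := by
    funext i
    by_cases h : i ∈ S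
    · exact dif_pos h
    · exact dif_neg h
  right_inv xz := by
    refine Prod.ext ?_ ?_
    · funext i; exact dif_pos i.2
    · funext i; exact dif_neg i.2

lemma marginal_eq_ptr (ψ : Matrix ((i : ι) → Fin (dim i)) ((i : ι) → Fin (dim i)) ℂ)
    (S : Finset ι) : marginal ψ S = ptr (splitEquiv dim S) ψ := rfl

def unionSplit (dim : ι → ℕ) (S₁ S₂ : Finset ι) (hd : Disjoint S₁ S₂) :
    ((i : {j : ι // j ∈ S₁ ∪ S₂}) → Fin (dim i.1)) ≃
      (((i : {j : ι // j ∈ S₁}) → Fin (dim i.1)) × ((i : {j : ι // j ∈ S₂}) → Fin (dim i.1))) where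
  toFun f := (fun i => f ⟨i.1, Finset.mem_union_left _ i.2⟩,
              fun i => f ⟨i.1, Finset.mem_union_right _ i.2⟩)
  invFun xz := fun i => if h : i.1 ∈ S₁ then xz.1 ⟨i.1, h⟩
    else xz.2 ⟨i.1, (Finset.mem_union.mp i.2).resolve_left h⟩
  left_inv f := by
    funext i
    by_cases h : i.1 ∈ S₁
    · exact dif_pos h
    · exact dif_neg h
  right_inv xz := by
    refine Prod.ext ?_ ?_
    · funext i; exact dif_pos i.2
    · funext i; exact dif_neg (Finset.disjoint_right.mp hd i.2)

def restEquiv₁ (dim : ι → ℕ) (S₁ S₂ : Finset ι) (hd : Disjoint S₁ S₂) :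
    (((i : {j : ι // j ∈ S₂}) → Fin (dim i.1)) × ((i : {j : ι // j ∉ S₁ ∪ S₂}) → Fin (dim i.1)))
      ≃ ((i : {j : ι // j ∉ S₁}) → Fin (dim i.1)) where
  toFun wu := fun i => if h : i.1 ∈ S₂ then wu.1 ⟨i.1, h⟩
    else wu.2 ⟨i.1, fun hm => (Finset.mem_union.mp hm).elim i.2 h⟩
  invFun v := (fun i => v ⟨i.1, Finset.disjoint_right.mp hd i.2⟩,
               fun i => v ⟨i.1, fun h1 => i.2 (Finset.mem_union_left _ h1)⟩)
  left_inv wu := by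
    refine Prod.ext ?_ ?_
    · funext i; exact dif_pos i.2
    · funext i; exact dif_neg (fun h => i.2 (Finset.mem_union_right _ h))
  right_inv v := by
    funext i
    by_cases h : i.1 ∈ S₂
    · exact dif_pos h
    · exact dif_neg h

def restEquiv₂ (dim : ι → ℕ) (S₁ S₂ : Finset ι) (hd : Disjoint S₁ S₂) :
    (((i : {j : ι // j ∈ S₁}) → Fin (dim i.1)) × ((i : {j : ι // j ∉ S₁ ∪ S₂}) → Fin (dim i.1)))
      ≃ ((i : {j : ι // j ∉ S₂}) → Fin (dim i.1)) where
  toFun xu := fun i => if h : i.1 ∈ S₁ then xu.1 ⟨i.1, h⟩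
    else xu.2 ⟨i.1, fun hm => (Finset.mem_union.mp hm).elim h i.2⟩
  invFun v := (fun i => v ⟨i.1, Finset.disjoint_left.mp hd i.2⟩,
               fun i => v ⟨i.1, fun h1 => i.2 (Finset.mem_union_right _ h1)⟩)
  left_inv xu := by
    refine Prod.ext ?_ ?_
    · funext i; exact dif_pos i.2
    · funext i; exact dif_neg (fun h => i.2 (Finset.mem_union_left _ h))
  right_inv v := by
    funext i
    by_cases h : i.1 ∈ S₁
    · exact dif_pos h
    · exact dif_neg h

lemma marginal_union₁ (ψ : Matrix ((i : ι) → Fin (dim i)) ((i : ι) → Fin (dim i)) ℂ)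
    (S₁ S₂ : Finset ι) (hd : Disjoint S₁ S₂) :
    marginal ψ S₁ = ptr (unionSplit dim S₁ S₂ hd) (marginal ψ (S₁ ∪ S₂)) := by
  ext x y
  have key : ∀ (x : (i : {j : ι // j ∈ S₁}) → Fin (dim i.1))
      (w : (i : {j : ι // j ∈ S₂}) → Fin (dim i.1))
      (u : (i : {j : ι // j ∉ S₁ ∪ S₂}) → Fin (dim i.1)),
      ((fun i => if h : i ∈ S₁ ∪ S₂ then ((unionSplit dim S₁ S₂ hd).symm (x, w)) ⟨i, h⟩
        else u ⟨i, h⟩) : (i : ι) → Fin (dim i))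
      = ((fun i => if h : i ∈ S₁ then x ⟨i, h⟩
          else (restEquiv₁ dim S₁ S₂ hd (w, u)) ⟨i, h⟩) : (i : ι) → Fin (dim i)) := by
    intro x w u
    funext i
    simp only [unionSplit, restEquiv₁, Equiv.coe_fn_symm_mk, Equiv.coe_fn_mk]
    by_cases h1 : i ∈ S₁
    · rw [dif_pos (Finset.mem_union_left _ h1), dif_pos h1, dif_pos h1]
    · by_cases h2 : i ∈ S₂
      · rw [dif_pos (Finset.mem_union_right _ h2), dif_neg h1, dif_neg h1, dif_pos h2]
      · have h3 : i ∉ S₁ ∪ S₂ := fun hm => (Finset.mem_union.mp hm).elim h1 h2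
        rw [dif_neg h3, dif_neg h1, dif_neg h2]
  show marginal ψ S₁ x y
      = ∑ w, marginal ψ (S₁ ∪ S₂) ((unionSplit dim S₁ S₂ hd).symm (x, w))
          ((unionSplit dim S₁ S₂ hd).symm (y, w))
  rw [marginal]
  have hrhs : ∀ w, marginal ψ (S₁ ∪ S₂) ((unionSplit dim S₁ S₂ hd).symm (x, w))
      ((unionSplit dim S₁ S₂ hd).symm (y, w))
      = ∑ u : (i : {j : ι // j ∉ S₁ ∪ S₂}) → Fin (dim i.1),
          ψ (fun i => if h : i ∈ S₁ then x ⟨i, h⟩ else (restEquiv₁ dim S₁ S₂ hd (w, u)) ⟨i, h⟩)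
            (fun i => if h : i ∈ S₁ then y ⟨i, h⟩ else (restEquiv₁ dim S₁ S₂ hd (w, u)) ⟨i, h⟩) := by
    intro w
    rw [marginal]
    refine Finset.sum_congr rfl (fun u _ => ?_)
    rw [key x w u, key y w u]
  rw [Finset.sum_congr rfl (fun w _ => hrhs w)]
  rw [← Equiv.sum_comp (restEquiv₁ dim S₁ S₂ hd)
    (fun v => ψ (fun i => if h : i ∈ S₁ then x ⟨i, h⟩ else v ⟨i, h⟩)
      (fun i => if h : i ∈ S₁ then y ⟨i, h⟩ else v ⟨i, h⟩))]
  exact Fintype.sum_prod_type _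

end Marginal

section Marginal2

variable {ι : Type*} [Fintype ι] [DecidableEq ι] {dim : ι → ℕ}

lemma marginal_union₂ (ψ : Matrix ((i : ι) → Fin (dim i)) ((i : ι) → Fin (dim i)) ℂ)
    (S₁ S₂ : Finset ι) (hd : Disjoint S₁ S₂) :
    marginal ψ S₂ = ptr ((unionSplit dim S₁ S₂ hd).trans (Equiv.prodComm _ _))
      (marginal ψ (S₁ ∪ S₂)) := by
  ext z z'
  have key : ∀ (x : (i : {j : ι // j ∈ S₁}) → Fin (dim i.1))
      (w : (i : {j : ι // j ∈ S₂}) → Fin (dim i.1))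
      (u : (i : {j : ι // j ∉ S₁ ∪ S₂}) → Fin (dim i.1)),
      ((fun i => if h : i ∈ S₁ ∪ S₂ then ((unionSplit dim S₁ S₂ hd).symm (x, w)) ⟨i, h⟩
        else u ⟨i, h⟩) : (i : ι) → Fin (dim i))
      = ((fun i => if h : i ∈ S₂ then w ⟨i, h⟩
          else (restEquiv₂ dim S₁ S₂ hd (x, u)) ⟨i, h⟩) : (i : ι) → Fin (dim i)) := by
    intro x w u
    funext i
    simp only [unionSplit, restEquiv₂, Equiv.coe_fn_symm_mk, Equiv.coe_fn_mk]
    by_cases h1 : i ∈ S₁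
    · have h2 : i ∉ S₂ := Finset.disjoint_left.mp hd h1
      rw [dif_pos (Finset.mem_union_left _ h1), dif_pos h1, dif_neg h2, dif_pos h1]
    · by_cases h2 : i ∈ S₂
      · rw [dif_pos (Finset.mem_union_right _ h2), dif_neg h1, dif_pos h2]
      · have h3 : i ∉ S₁ ∪ S₂ := fun hm => (Finset.mem_union.mp hm).elim h1 h2
        rw [dif_neg h3, dif_neg h2, dif_neg h1]
  show marginal ψ S₂ z z'
      = ∑ x, marginal ψ (S₁ ∪ S₂) ((unionSplit dim S₁ S₂ hd).symm (x, z))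
          ((unionSplit dim S₁ S₂ hd).symm (x, z'))
  rw [marginal]
  have hrhs : ∀ x, marginal ψ (S₁ ∪ S₂) ((unionSplit dim S₁ S₂ hd).symm (x, z))
      ((unionSplit dim S₁ S₂ hd).symm (x, z'))
      = ∑ u : (i : {j : ι // j ∉ S₁ ∪ S₂}) → Fin (dim i.1),
          ψ (fun i => if h : i ∈ S₂ then z ⟨i, h⟩ else (restEquiv₂ dim S₁ S₂ hd (x, u)) ⟨i, h⟩)
            (fun i => if h : i ∈ S₂ then z' ⟨i, h⟩ else (restEquiv₂ dim S₁ S₂ hd (x, u)) ⟨i, h⟩) := by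
    intro x
    rw [marginal]
    refine Finset.sum_congr rfl (fun u _ => ?_)
    rw [key x z u, key x z' u]
  rw [Finset.sum_congr rfl (fun x _ => hrhs x)]
  rw [← Equiv.sum_comp (restEquiv₂ dim S₁ S₂ hd)
    (fun v => ψ (fun i => if h : i ∈ S₂ then z ⟨i, h⟩ else v ⟨i, h⟩)
      (fun i => if h : i ∈ S₂ then z' ⟨i, h⟩ else v ⟨i, h⟩))]
  exact Fintype.sum_prod_type _

lemma mEnt_subadd (ψ : Matrix ((i : ι) → Fin (dim i)) ((i : ι) → Fin (dim i)) ℂ)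
    (hψ : ψ.PosSemidef) (htr : ψ.trace = 1)
    (S₁ S₂ : Finset ι) (hd : Disjoint S₁ S₂) :
    mEnt ψ (S₁ ∪ S₂) ≤ mEnt ψ S₁ + mEnt ψ S₂ := by
  have hm12 : marginal ψ (S₁ ∪ S₂) = ptr (splitEquiv dim (S₁ ∪ S₂)) ψ :=
    marginal_eq_ptr ψ (S₁ ∪ S₂)
  have hpsd : (marginal ψ (S₁ ∪ S₂)).PosSemidef := by
    rw [hm12]; exact ptr_posSemidef _ hψ
  have htr2 : (marginal ψ (S₁ ∪ S₂)).trace = 1 := by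
    rw [hm12, ptr_trace]; exact htr
  have h := vnEntropy_subadd (unionSplit dim S₁ S₂ hd) (marginal ψ (S₁ ∪ S₂)) hpsd htr2
  rw [mEnt, mEnt, mEnt]
  rw [marginal_union₁ ψ S₁ S₂ hd, marginal_union₂ ψ S₁ S₂ hd]
  exact h

end Marginal2

/-- fundamental averaged bound for catalytic codes:
`S(A_f) - S(B_in) ≤ E_I S(X_I) - E_J S(X_J) - E_J S(F|X_J)`.
Systems: `A_f = Sum.inr 0`, `F = Sum.inr 1`, `B_in = Sum.inr 2`. -/
theorem catalytic_fundamental_bound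
    (n d q : ℕ) (hq : 2 ≤ q) (hd : 2 ≤ d) (hdn : d ≤ n)
    (dim : Fin n ⊕ Fin 3 → ℕ)
    (hdimX : ∀ i : Fin n, dim (Sum.inl i) = q)
    (ψ : Matrix ((i : Fin n ⊕ Fin 3) → Fin (dim i))
                ((i : Fin n ⊕ Fin 3) → Fin (dim i)) ℂ)
    (hpsd : ψ.PosSemidef) (htr : ψ.trace = 1) (hpure : ψ.rank = 1)
    (hdec : ∀ I J : Finset (Fin n), Disjoint I J → I ∪ J = Finset.univ →
      I.card = n - d + 1 → J.card = d - 1 →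
      mEnt ψ (I.image Sum.inl ∪ ({Sum.inr 2} : Finset (Fin n ⊕ Fin 3))) =
        mEnt ψ ({Sum.inr 0} : Finset (Fin n ⊕ Fin 3)) + mEnt ψ (({Sum.inr 1} : Finset (Fin n ⊕ Fin 3)) ∪ J.image Sum.inl)) :
    mEnt ψ ({Sum.inr 0} : Finset (Fin n ⊕ Fin 3)) - mEnt ψ ({Sum.inr 2} : Finset (Fin n ⊕ Fin 3))
      ≤ (∑ I ∈ Finset.powersetCard (n - d + 1) (Finset.univ : Finset (Fin n)),
            mEnt ψ (I.image Sum.inl)) / (n.choose (n - d + 1) : ℝ)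
        - (∑ J ∈ Finset.powersetCard (d - 1) (Finset.univ : Finset (Fin n)),
            mEnt ψ (J.image Sum.inl)) / (n.choose (d - 1) : ℝ)
        - (∑ J ∈ Finset.powersetCard (d - 1) (Finset.univ : Finset (Fin n)),
            (mEnt ψ (({Sum.inr 1} : Finset (Fin n ⊕ Fin 3)) ∪ J.image Sum.inl) - mEnt ψ (J.image Sum.inl)))
          / (n.choose (d - 1) : ℝ) := by
  classical
  have hd1n : d - 1 ≤ n := by omega
  have hchoose : n.choose (n - d + 1) = n.choose (d - 1) := by
    rw [← Nat.choose_symm hd1n]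
    congr 1
    omega
  set C : ℝ := (n.choose (d - 1) : ℝ) with hCdef
  have hCpos : 0 < C := by
    rw [hCdef]
    exact_mod_cast Nat.choose_pos hd1n
  set SA : ℝ := mEnt ψ ({Sum.inr 0} : Finset (Fin n ⊕ Fin 3)) with hSA
  set SB : ℝ := mEnt ψ ({Sum.inr 2} : Finset (Fin n ⊕ Fin 3)) with hSB
  set T1 : ℝ := ∑ I ∈ Finset.powersetCard (n - d + 1) (Finset.univ : Finset (Fin n)),
      mEnt ψ (I.image Sum.inl) with hT1
  set T2 : ℝ := ∑ J ∈ Finset.powersetCard (d - 1) (Finset.univ : Finset (Fin n)),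
      mEnt ψ (J.image Sum.inl) with hT2
  set T3 : ℝ := ∑ J ∈ Finset.powersetCard (d - 1) (Finset.univ : Finset (Fin n)),
      mEnt ψ (({Sum.inr 1} : Finset (Fin n ⊕ Fin 3)) ∪ J.image Sum.inl) with hT3
  set T4 : ℝ := ∑ I ∈ Finset.powersetCard (n - d + 1) (Finset.univ : Finset (Fin n)),
      mEnt ψ (I.image Sum.inl ∪ ({Sum.inr 2} : Finset (Fin n ⊕ Fin 3))) with hT4
  have hcards : ∀ J : Finset (Fin n), J.card = d - 1 → Jᶜ.card = n - d + 1 := by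
    intro J hJ
    rw [Finset.card_compl, hJ, Fintype.card_fin]
    omega
  have hdec' : ∀ J ∈ Finset.powersetCard (d - 1) (Finset.univ : Finset (Fin n)),
      mEnt ψ ((Jᶜ).image Sum.inl ∪ ({Sum.inr 2} : Finset (Fin n ⊕ Fin 3)))
        = SA + mEnt ψ (({Sum.inr 1} : Finset (Fin n ⊕ Fin 3)) ∪ J.image Sum.inl) := by
    intro J hJ
    rw [Finset.mem_powersetCard_univ] at hJ
    refine hdec Jᶜ J disjoint_compl_left ?_ (hcards J hJ) hJ
    ext x
    by_cases h : x ∈ J <;> simp [h]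
  have hreindex : T4 = ∑ J ∈ Finset.powersetCard (d - 1) (Finset.univ : Finset (Fin n)),
      mEnt ψ ((Jᶜ).image Sum.inl ∪ ({Sum.inr 2} : Finset (Fin n ⊕ Fin 3))) := by
    rw [hT4]
    refine Finset.sum_nbij' (fun I => Iᶜ) (fun J => Jᶜ) ?_ ?_ ?_ ?_ ?_
    · intro I hI
      rw [Finset.mem_powersetCard_univ] at hI ⊢
      rw [Finset.card_compl, hI, Fintype.card_fin]
      omega
    · intro J hJ
      rw [Finset.mem_powersetCard_univ] at hJ ⊢
      exact hcards J hJ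
    · intro I _; exact compl_compl I
    · intro J _; exact compl_compl J
    · intro I _; rw [compl_compl]
  have hcard_pc : (Finset.powersetCard (d - 1) (Finset.univ : Finset (Fin n))).card
      = n.choose (d - 1) := by
    rw [Finset.card_powersetCard, Finset.card_univ, Fintype.card_fin]
  have hT4eq : T4 = C * SA + T3 := by
    rw [hreindex, Finset.sum_congr rfl hdec', Finset.sum_add_distrib, Finset.sum_const,
      hcard_pc, nsmul_eq_mul, hT3]
  have hsub : ∀ I ∈ Finset.powersetCard (n - d + 1) (Finset.univ : Finset (Fin n)),
      mEnt ψ (I.image Sum.inl ∪ ({Sum.inr 2} : Finset (Fin n ⊕ Fin 3)))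
        ≤ mEnt ψ (I.image Sum.inl) + SB := by
    intro I _
    refine mEnt_subadd ψ hpsd htr _ _ ?_
    rw [Finset.disjoint_left]
    intro x hx hx2
    rw [Finset.mem_image] at hx
    obtain ⟨i, _, rfl⟩ := hx
    simp at hx2
  have hcard_pc' : (Finset.powersetCard (n - d + 1) (Finset.univ : Finset (Fin n))).card
      = n.choose (d - 1) := by
    rw [Finset.card_powersetCard, Finset.card_univ, Fintype.card_fin, hchoose]
  have hT4le : T4 ≤ T1 + C * SB := by
    rw [hT4, hT1]
    calc ∑ I ∈ Finset.powersetCard (n - d + 1) (Finset.univ : Finset (Fin n)),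
          mEnt ψ (I.image Sum.inl ∪ ({Sum.inr 2} : Finset (Fin n ⊕ Fin 3)))
        ≤ ∑ I ∈ Finset.powersetCard (n - d + 1) (Finset.univ : Finset (Fin n)),
          (mEnt ψ (I.image Sum.inl) + SB) := Finset.sum_le_sum hsub
      _ = (∑ I ∈ Finset.powersetCard (n - d + 1) (Finset.univ : Finset (Fin n)),
          mEnt ψ (I.image Sum.inl)) + C * SB := by
          rw [Finset.sum_add_distrib, Finset.sum_const, hcard_pc', nsmul_eq_mul]
  rw [hchoose, Finset.sum_sub_distrib]
  have hgoal : T1 / C - T2 / C - (T3 - T2) / C = (T1 - T3) / C := by ring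
  rw [← hT2, ← hT3, hgoal]
  rw [le_div_iff₀ hCpos]
  nlinarith [hT4eq, hT4le]
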